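/- arXiv:1407.0890 — 3 statements merged into one kernel-verified Lean document; each statement's English description precedes it below -/
import Mathlib

section
/- Let Γ be an almost normal subgroup of G such that [Γ : Γ_σ] = [Γ : Γ_{σ⁻¹}] for every σ ∈ G. For σ ∈ G let T_σ be the Hecke operator on finitely supported functions on Γ\G defined by T_σ[Γg] = Σᵢ [Γσᵢg], where ΓσΓ = ⨆ᵢ Γσᵢ. Then for all σ, τ ∈ G the coefficient of [Γ] in T_σT_τ[Γ] equals the coefficient of [Γ] in T_τT_σ[Γ]; that is, the vector state at [Γ] is a trace on the Hecke algebra. -/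
section Aux
variable {G : Type*} [Group G]

private def lcos (Γ : Subgroup G) (c : G) : Set G := {x : G | ∃ γ ∈ Γ, x = γ * c}
private def dcos (Γ : Subgroup G) (c : G) : Set G := {x : G | ∃ γ ∈ Γ, ∃ γ' ∈ Γ, x = γ * c * γ'}

private lemma self_mem_dcos (Γ : Subgroup G) (c : G) : c ∈ dcos Γ c :=
  ⟨1, Γ.one_mem, 1, Γ.one_mem, by group⟩

private lemma dcos_eq_of_mem {Γ : Subgroup G} {c y : G} (h : y ∈ dcos Γ c) :
    dcos Γ y = dcos Γ c := by
  obtain ⟨γ, hγ, γ', hγ', rfl⟩ := h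
  ext g
  constructor
  · rintro ⟨u, hu, v, hv, rfl⟩
    exact ⟨u * γ, Γ.mul_mem hu hγ, γ' * v, Γ.mul_mem hγ' hv, by group⟩
  · rintro ⟨u, hu, v, hv, rfl⟩
    exact ⟨u * γ⁻¹, Γ.mul_mem hu (Γ.inv_mem hγ), γ'⁻¹ * v,
      Γ.mul_mem (Γ.inv_mem hγ') hv, by group⟩

private lemma inv_mem_dcos {Γ : Subgroup G} {c y : G} (h : y ∈ dcos Γ c) :
    y⁻¹ ∈ dcos Γ c⁻¹ := by
  obtain ⟨γ, hγ, γ', hγ', rfl⟩ := h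
  exact ⟨γ'⁻¹, Γ.inv_mem hγ', γ⁻¹, Γ.inv_mem hγ, by group⟩

private lemma mul_mem_dcos {Γ : Subgroup G} {c y γ : G} (h : y ∈ dcos Γ c) (hγ : γ ∈ Γ) :
    y * γ ∈ dcos Γ c := by
  obtain ⟨u, hu, v, hv, rfl⟩ := h
  exact ⟨u, hu, v * γ, Γ.mul_mem hv hγ, by group⟩

/-- the number of left cosets in a double coset decomposition is `[Γ : Γ ∩ x⁻¹Γx]`. -/
private lemma coset_count (Γ : Subgroup G) (x : G) (n : ℕ) (c : Fin n → G)
    (hD : dcos Γ x = ⋃ i, lcos Γ (c i))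
    (hdisj : ∀ i j : Fin n, i ≠ j → Disjoint (lcos Γ (c i)) (lcos Γ (c j))) :
    n = (Γ ⊓ Γ.map (MulAut.conj x⁻¹).toMonoidHom).relIndex Γ := by
  set S := (Γ ⊓ Γ.map (MulAut.conj x⁻¹).toMonoidHom).subgroupOf Γ with hS
  have memS : ∀ (w : Γ), w ∈ S ↔ x * (w : G) * x⁻¹ ∈ Γ := by
    intro w
    rw [hS, Subgroup.mem_subgroupOf, Subgroup.mem_inf]
    constructor
    · rintro ⟨-, h⟩
      rw [Subgroup.mem_map] at h
      obtain ⟨y, hy, h⟩ := h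
      simp only [MulEquiv.coe_toMonoidHom, MulAut.conj_apply] at h
      have : x * (w : G) * x⁻¹ = y := by rw [← h]; group
      rw [this]; exact hy
    · intro h
      refine ⟨w.2, ?_⟩
      rw [Subgroup.mem_map]
      exact ⟨x * (w : G) * x⁻¹, h, by simp [MulAut.conj_apply]; group⟩
  have hc : ∀ i, c i ∈ dcos Γ x := by
    intro i
    rw [hD]
    exact Set.mem_iUnion.2 ⟨i, 1, Γ.one_mem, by group⟩
  choose u hu v hv hcuv using hc
  let g : Fin n → Γ ⧸ S := fun i => QuotientGroup.mk ⟨(v i)⁻¹, Γ.inv_mem (hv i)⟩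
  have hginj : Function.Injective g := by
    intro i j hij
    by_contra hne
    rw [QuotientGroup.eq] at hij
    rw [memS] at hij
    have hval : (((⟨(v i)⁻¹, Γ.inv_mem (hv i)⟩ : Γ))⁻¹ * ⟨(v j)⁻¹, Γ.inv_mem (hv j)⟩ : Γ) =
        (⟨v i * (v j)⁻¹, Γ.mul_mem (hv i) (Γ.inv_mem (hv j))⟩ : Γ) := by
      ext; simp
    rw [hval] at hij
    -- hij : x * (v i * (v j)⁻¹) * x⁻¹ ∈ Γ
    set δ : G := x * (v i * (v j)⁻¹) * x⁻¹ with hδ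
    have hci : c i ∈ lcos Γ (c j) := by
      refine ⟨u i * δ * (u j)⁻¹, Γ.mul_mem (Γ.mul_mem (hu i) hij) (Γ.inv_mem (hu j)), ?_⟩
      rw [hcuv i, hcuv j, hδ]; group
    exact (Set.disjoint_left.1 (hdisj i j hne)) ⟨1, Γ.one_mem, by group⟩ hci
  have hgsurj : Function.Surjective g := by
    intro q
    induction q using QuotientGroup.induction_on with
    | H γ =>
      have hmem : x * (γ : G)⁻¹ ∈ dcos Γ x := ⟨1, Γ.one_mem, (γ : G)⁻¹, Γ.inv_mem γ.2, by group⟩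
      rw [hD] at hmem
      obtain ⟨i, δ, hδ, hi⟩ := Set.mem_iUnion.1 hmem
      refine ⟨i, ?_⟩
      show QuotientGroup.mk _ = _
      rw [QuotientGroup.eq, memS]
      have hval : (((⟨(v i)⁻¹, Γ.inv_mem (hv i)⟩ : Γ))⁻¹ * γ : Γ) =
          (⟨v i * (γ : G), Γ.mul_mem (hv i) γ.2⟩ : Γ) := by ext; simp
    
      rw [hval]
      -- hi : x * γ⁻¹ = δ * c i = δ * (u i * x * v i)
      rw [hcuv i] at hi
      have h5 : (δ * u i) * (x * (v i * (γ : G)) * x⁻¹) = 1 := by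
        have h6 : (δ * u i) * (x * (v i * (γ : G)) * x⁻¹)
            = (δ * (u i * x * v i)) * ((γ : G) * x⁻¹) := by group
        rw [h6, ← hi]; group
      show x * (v i * (γ : G)) * x⁻¹ ∈ Γ
      rw [eq_inv_of_mul_eq_one_right h5]
      exact Γ.inv_mem (Γ.mul_mem hδ (hu i))
  have hcard := Nat.card_eq_of_bijective g ⟨hginj, hgsurj⟩
  rw [Nat.card_eq_fintype_card, Fintype.card_fin] at hcard
  rw [Subgroup.relIndex, ← hS, Subgroup.index_eq_card]
  exact hcard

/-- pair count equals count of j with (b j)⁻¹ in the double coset of σ. -/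
private lemma pair_count (Γ : Subgroup G) (σ : G) (m k : ℕ) (a : Fin m → G) (b : Fin k → G)
    (hDa : dcos Γ σ = ⋃ i, lcos Γ (a i))
    (hdisja : ∀ i j : Fin m, i ≠ j → Disjoint (lcos Γ (a i)) (lcos Γ (a j))) :
    Nat.card {p : Fin m × Fin k // a p.1 * b p.2 ∈ Γ}
      = Nat.card {j : Fin k // (b j)⁻¹ ∈ dcos Γ σ} := by
  have hmem : ∀ (p : Fin m × Fin k), a p.1 * b p.2 ∈ Γ → (b p.2)⁻¹ ∈ lcos Γ (a p.1) := by
    rintro ⟨i, j⟩ h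
    exact ⟨(a i * b j)⁻¹, Γ.inv_mem h, by group⟩
  refine Nat.card_eq_of_bijective
    (fun p => ⟨p.1.2, by rw [hDa]; exact Set.mem_iUnion.2 ⟨p.1.1, hmem p.1 p.2⟩⟩) ⟨?_, ?_⟩
  · rintro ⟨⟨i, j⟩, hp⟩ ⟨⟨i', j'⟩, hp'⟩ h
    simp only [Subtype.mk.injEq] at h
    subst h
    have : i = i' := by
      by_contra hne
      exact (Set.disjoint_left.1 (hdisja i i' hne)) (hmem _ hp) (hmem _ hp')
    subst this; rfl
  · rintro ⟨j, hj⟩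
    rw [hDa] at hj
    obtain ⟨i, γ, hγ, hij⟩ := Set.mem_iUnion.1 hj
    refine ⟨⟨(i, j), ?_⟩, rfl⟩
    have : a i * b j = γ⁻¹ := by
      have : b j = ((b j)⁻¹)⁻¹ := by group
      rw [hij] at this
      rw [this]; group
    rw [this]; exact Γ.inv_mem hγ

end Aux

/-- For an almost normal subgroup `Γ ≤ G` with `[Γ : Γ_σ] = [Γ : Γ_{σ⁻¹}]` for all `σ`,
the vector state at `[Γ]` is a trace on the Hecke algebra: given decompositions
`ΓσΓ = ⊔ᵢ Γaᵢ` and `ΓτΓ = ⊔ⱼ Γbⱼ` into left cosets, the coefficient of `[Γ]` in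
`T_σT_τ[Γ]` equals the coefficient of `[Γ]` in `T_τT_σ[Γ]`. -/
theorem stmt4 {G : Type*} [Group G] (Γ : Subgroup G)
    (hal : ∀ g : G, (Γ ⊓ Γ.map (MulAut.conj g).toMonoidHom).relIndex Γ ≠ 0)
    (hsym : ∀ g : G, (Γ ⊓ Γ.map (MulAut.conj g).toMonoidHom).relIndex Γ
      = (Γ ⊓ Γ.map (MulAut.conj g⁻¹).toMonoidHom).relIndex Γ)
    (σ τ : G) (m k : ℕ) (a : Fin m → G) (b : Fin k → G)
    (hDa : {x : G | ∃ γ ∈ Γ, ∃ γ' ∈ Γ, x = γ * σ * γ'}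
      = ⋃ i, {x : G | ∃ γ ∈ Γ, x = γ * a i})
    (hdisja : ∀ i j : Fin m, i ≠ j →
      Disjoint {x : G | ∃ γ ∈ Γ, x = γ * a i} {x : G | ∃ γ ∈ Γ, x = γ * a j})
    (hDb : {x : G | ∃ γ ∈ Γ, ∃ γ' ∈ Γ, x = γ * τ * γ'}
      = ⋃ j, {x : G | ∃ γ ∈ Γ, x = γ * b j})
    (hdisjb : ∀ i j : Fin k, i ≠ j →
      Disjoint {x : G | ∃ γ ∈ Γ, x = γ * b i} {x : G | ∃ γ ∈ Γ, x = γ * b j}) :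
    Nat.card {p : Fin m × Fin k // a p.1 * b p.2 ∈ Γ}
      = Nat.card {p : Fin k × Fin m // b p.1 * a p.2 ∈ Γ} := by
  have hDa' : dcos Γ σ = ⋃ i, lcos Γ (a i) := hDa
  have hDb' : dcos Γ τ = ⋃ j, lcos Γ (b j) := hDb
  have hdisja' : ∀ i j : Fin m, i ≠ j → Disjoint (lcos Γ (a i)) (lcos Γ (a j)) := hdisja
  have hdisjb' : ∀ i j : Fin k, i ≠ j → Disjoint (lcos Γ (b i)) (lcos Γ (b j)) := hdisjb
  have haD : ∀ i, a i ∈ dcos Γ σ := by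
    intro i; rw [hDa']; exact Set.mem_iUnion.2 ⟨i, 1, Γ.one_mem, by group⟩
  have hbD : ∀ j, b j ∈ dcos Γ τ := by
    intro j; rw [hDb']; exact Set.mem_iUnion.2 ⟨j, 1, Γ.one_mem, by group⟩
  rw [pair_count Γ σ m k a b hDa' hdisja', pair_count Γ τ k m b a hDb' hdisjb']
  by_cases hex : ∃ j : Fin k, (b j)⁻¹ ∈ dcos Γ σ
  · obtain ⟨j₀, hj₀⟩ := hex
    -- Γσ⁻¹Γ = ΓτΓ
    have hστ : dcos Γ σ⁻¹ = dcos Γ τ := by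
      have h1 : dcos Γ ((b j₀)⁻¹) = dcos Γ σ := dcos_eq_of_mem hj₀
      have h2 : σ ∈ dcos Γ ((b j₀)⁻¹) := by rw [h1]; exact self_mem_dcos Γ σ
      have h3 : σ⁻¹ ∈ dcos Γ (b j₀) := by
        have := inv_mem_dcos h2
        rwa [inv_inv] at this
      have h4 : dcos Γ (b j₀) = dcos Γ τ := dcos_eq_of_mem (hbD j₀)
      rw [h4] at h3
      exact dcos_eq_of_mem h3
    have hballb : ∀ j : Fin k, (b j)⁻¹ ∈ dcos Γ σ := by
      intro j
      have h1 : b j ∈ dcos Γ σ⁻¹ := by rw [hστ]; exact hbD j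
      have := inv_mem_dcos h1
      rwa [inv_inv] at this
    have haalla : ∀ i : Fin m, (a i)⁻¹ ∈ dcos Γ τ := by
      intro i
      have := inv_mem_dcos (haD i)
      rwa [hστ] at this
    rw [Nat.card_congr (Equiv.subtypeUnivEquiv hballb),
      Nat.card_congr (Equiv.subtypeUnivEquiv haalla)]
    simp only [Nat.card_eq_fintype_card, Fintype.card_fin]
    -- k = m
    have hk : k = (Γ ⊓ Γ.map (MulAut.conj σ).toMonoidHom).relIndex Γ := by
      have := coset_count Γ σ⁻¹ k b (by rw [hστ]; exact hDb') hdisjb'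
      rwa [inv_inv] at this
    have hm : m = (Γ ⊓ Γ.map (MulAut.conj σ⁻¹).toMonoidHom).relIndex Γ :=
      coset_count Γ σ m a hDa' hdisja'
    rw [hk, hm, hsym σ]
  · have hex2 : ¬ ∃ i : Fin m, (a i)⁻¹ ∈ dcos Γ τ := by
      rintro ⟨i, hi⟩
      rw [hDb'] at hi
      obtain ⟨j, γ, hγ, hij⟩ := Set.mem_iUnion.1 hi
      apply hex
      refine ⟨j, ?_⟩
      have hbj : (b j)⁻¹ = a i * γ := by
        have : b j = γ⁻¹ * (a i)⁻¹ := by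
          have h := hij
          rw [eq_comm] at h
          have : γ⁻¹ * (a i)⁻¹ = γ⁻¹ * (γ * b j) := by rw [← hij]
          rw [this]; group
        rw [this]; group
      rw [hbj]
      exact mul_mem_dcos (haD i) hγ
    have h1 : IsEmpty {j : Fin k // (b j)⁻¹ ∈ dcos Γ σ} := by
      rw [isEmpty_subtype]; exact fun j hj => hex ⟨j, hj⟩
    have h2 : IsEmpty {i : Fin m // (a i)⁻¹ ∈ dcos Γ τ} := by
      rw [isEmpty_subtype]; exact fun i hi => hex2 ⟨i, hi⟩
    rw [Nat.card_of_isEmpty, Nat.card_of_isEmpty]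
end

section
/- Let π be a unitary representation of a group G on H, Γ ≤ G, L a Γ-wandering generating subspace for π|_Γ with projection P_L, and P₀ an orthogonal projection on H commuting with π(g) for all g ∈ G. Set π₀(g) = P₀π(g)P₀. Then for all σ₁, σ₂ ∈ G, the family (π₀(σ₁γ) P_L π₀(γ⁻¹σ₂))_{γ∈Γ} is summable in the strong operator topology with sum π₀(σ₁σ₂). In particular Σ_{γ∈Γ} P_L π₀(σ₁γ) P_L π₀(γ⁻¹σ₂) P_L = P_L π₀(σ₁σ₂) P_L. -/
open scoped InnerProductSpace

set_option maxHeartbeats 1000000 in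
lemma wandering_hasSum {G H : Type*} [Group G] [NormedAddCommGroup H] [InnerProductSpace ℂ H]
    [CompleteSpace H] (π : G →* (H →L[ℂ] H))
    (hunit : ∀ (g : G) (x y : H), ⟪π g x, π g y⟫_ℂ = ⟪x, y⟫_ℂ)
    (Γ : Subgroup G) (L : Submodule ℂ H)
    (horth : ∀ γ γ' : Γ, γ ≠ γ' → ∀ x ∈ L, ∀ y ∈ L, ⟪π ↑γ x, π ↑γ' y⟫_ℂ = 0)
    (hgen : (⨆ γ : Γ, L.map (π ↑γ).toLinearMap).topologicalClosure = ⊤)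
    (P : H →L[ℂ] H)
    (hPmem : ∀ x : H, P x ∈ L)
    (hPorth : ∀ x : H, ∀ y ∈ L, ⟪x - P x, y⟫_ℂ = 0)
    (y : H) :
    HasSum (fun γ : Γ => π ↑γ (P (π ((↑γ : G))⁻¹ y))) y := by
  set K : Γ → Submodule ℂ H := fun γ => L.map (π ↑γ).toLinearMap with hK
  set v : Γ → H := fun γ => π ↑γ (P (π ((↑γ : G))⁻¹ y)) with hv
  have hπcomp : ∀ (a b : G) (x : H), π a (π b x) = π (a * b) x := by
    intro a b x; rw [map_mul]; rfl
  have hmemK : ∀ γ : Γ, v γ ∈ K γ := fun γ => ⟨P (π ((↑γ : G))⁻¹ y), hPmem _, rfl⟩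
  have hC : ∀ (γ : Γ), ∀ l ∈ L, ⟪y - v γ, π ↑γ l⟫_ℂ = 0 := by
    intro γ l hl
    have hy : π (↑γ : G) (π ((↑γ : G))⁻¹ y) = y := by
      rw [hπcomp, mul_inv_cancel, map_one]; rfl
    have : y - v γ = π ↑γ ((π ((↑γ : G))⁻¹ y) - P (π ((↑γ : G))⁻¹ y)) := by
      rw [map_sub, hy]
    rw [this, hunit]
    exact hPorth _ _ hl
  have hD : ∀ (F : Finset Γ) (γ : Γ), γ ∈ F → ∀ l ∈ L,
      ⟪y - ∑ γ' ∈ F, v γ', π ↑γ l⟫_ℂ = 0 := by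
    intro F γ hγ l hl
    rw [inner_sub_left, sum_inner]
    have hsum : ∑ γ' ∈ F, ⟪v γ', π ↑γ l⟫_ℂ = ⟪v γ, π ↑γ l⟫_ℂ := by
      refine Finset.sum_eq_single_of_mem γ hγ ?_
      intro γ' _ hne
      exact horth γ' γ hne _ (hPmem _) l hl
    rw [hsum, ← inner_sub_left]
    exact hC γ l hl
  have hD' : ∀ (F : Finset Γ), ∀ w ∈ F.sup K, ⟪y - ∑ γ' ∈ F, v γ', w⟫_ℂ = 0 := by
    intro F w hw
    have hle : F.sup K ≤ LinearMap.ker ((innerSL ℂ (y - ∑ γ' ∈ F, v γ')) : H →ₗ[ℂ] ℂ) := by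
      refine Finset.sup_le ?_
      rintro γ hγ x ⟨l, hl, rfl⟩
      simpa only [LinearMap.mem_ker, ContinuousLinearMap.coe_coe, innerSL_apply_apply] using hD F γ hγ l hl
    simpa only [LinearMap.mem_ker, ContinuousLinearMap.coe_coe, innerSL_apply_apply] using hle hw
  have hmin : ∀ (F : Finset Γ), ∀ w ∈ F.sup K,
      ‖y - ∑ γ' ∈ F, v γ'‖ ≤ ‖y - w‖ := by
    intro F w hw
    have hsmem : (∑ γ' ∈ F, v γ') ∈ F.sup K :=
      Submodule.sum_mem _ (fun γ hγ => (Finset.le_sup (f := K) hγ) (hmemK γ))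
    have hdiff : ((∑ γ' ∈ F, v γ') - w) ∈ F.sup K := Submodule.sub_mem _ hsmem hw
    have horth0 : ⟪y - ∑ γ' ∈ F, v γ', (∑ γ' ∈ F, v γ') - w⟫_ℂ = 0 := hD' F _ hdiff
    have hsplit : y - w = (y - ∑ γ' ∈ F, v γ') + ((∑ γ' ∈ F, v γ') - w) := by abel
    have hpyth : ‖y - w‖ * ‖y - w‖
        = ‖y - ∑ γ' ∈ F, v γ'‖ * ‖y - ∑ γ' ∈ F, v γ'‖
          + ‖(∑ γ' ∈ F, v γ') - w‖ * ‖(∑ γ' ∈ F, v γ')- w‖ := by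
      rw [hsplit]
      exact norm_add_sq_eq_norm_sq_add_norm_sq_of_inner_eq_zero _ _ horth0
    nlinarith [norm_nonneg (y - ∑ γ' ∈ F, v γ'), norm_nonneg (y - w),
      norm_nonneg ((∑ γ' ∈ F, v γ') - w), sq_nonneg (‖(∑ γ' ∈ F, v γ') - w‖)]
  have hbasis : ∀ ε : ℝ, 0 < ε → ∃ F0 : Finset Γ, ∀ F : Finset Γ, F0 ≤ F →
      dist (∑ γ' ∈ F, v γ') y < ε := by
    intro ε hε
    have hy : y ∈ closure ((⨆ γ : Γ, K γ : Submodule ℂ H) : Set H) := by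
      have : y ∈ ((⨆ γ : Γ, K γ).topologicalClosure : Set H) := by
        rw [hK, hgen]; trivial
      simpa using this
    obtain ⟨z, hz, hzy⟩ := Metric.mem_closure_iff.1 hy ε hε
    obtain ⟨F0, hF0⟩ := Submodule.mem_iSup_iff_exists_finset.1 hz
    refine ⟨F0, fun F hF => ?_⟩
    have hzF : z ∈ F.sup K := by
      have hle : (⨆ γ ∈ F0, K γ) ≤ F.sup K := by
        rw [← Finset.sup_eq_iSup]
        exact Finset.sup_mono hF
      exact hle hF0
    have hle := hmin F z hzF
    calc dist (∑ γ' ∈ F, v γ') y = ‖y - ∑ γ' ∈ F, v γ'‖ := by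
          rw [dist_eq_norm, norm_sub_rev]
      _ ≤ ‖y - z‖ := hle
      _ < ε := by rwa [dist_eq_norm] at hzy
  exact (Filter.atTop_basis.tendsto_iff Metric.nhds_basis_ball).2 fun ε hε => by
    obtain ⟨F0, h⟩ := hbasis ε hε
    exact ⟨F0, trivial, fun F hF => by simpa [Metric.mem_ball] using h F hF⟩

/-- With `L` a `Γ`-wandering generating subspace for `π`, `P₀` an orthogonal projection
commuting with `π(G)` and `π₀(g) = P₀π(g)P₀`, for all `σ₁, σ₂ ∈ G` the family
`(π₀(σ₁γ) P_L π₀(γ⁻¹σ₂))_{γ∈Γ}` is summable in the strong operator topology with sum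
`π₀(σ₁σ₂)`; in particular `Σ_γ P_L π₀(σ₁γ) P_L π₀(γ⁻¹σ₂) P_L = P_L π₀(σ₁σ₂) P_L`. -/
theorem stmt12 {G H : Type*} [Group G] [NormedAddCommGroup H] [InnerProductSpace ℂ H]
    [CompleteSpace H] (π : G →* (H →L[ℂ] H))
    (hunit : ∀ (g : G) (x y : H), ⟪π g x, π g y⟫_ℂ = ⟪x, y⟫_ℂ)
    (Γ : Subgroup G) (L : Submodule ℂ H)
    (horth : ∀ γ γ' : Γ, γ ≠ γ' → ∀ x ∈ L, ∀ y ∈ L, ⟪π ↑γ x, π ↑γ' y⟫_ℂ = 0)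
    (hgen : (⨆ γ : Γ, L.map (π ↑γ).toLinearMap).topologicalClosure = ⊤)
    (P : H →L[ℂ] H)
    (hPmem : ∀ x : H, P x ∈ L) (hPfix : ∀ x ∈ L, P x = x)
    (hPorth : ∀ x : H, ∀ y ∈ L, ⟪x - P x, y⟫_ℂ = 0)
    (P₀ : H →L[ℂ] H) (hP₀idem : P₀.comp P₀ = P₀)
    (hP₀sa : ∀ x y : H, ⟪P₀ x, y⟫_ℂ = ⟪x, P₀ y⟫_ℂ)
    (hcomm : ∀ g : G, P₀.comp (π g) = (π g).comp P₀)
    (σ₁ σ₂ : G) :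
    ∀ x : H,
      HasSum (fun γ : Γ =>
          P₀ (π (σ₁ * ↑γ) (P₀ (P (P₀ (π ((↑γ : G)⁻¹ * σ₂) (P₀ x)))))))
        (P₀ (π (σ₁ * σ₂) (P₀ x))) ∧
      HasSum (fun γ : Γ =>
          P (P₀ (π (σ₁ * ↑γ) (P₀ (P (P₀ (π ((↑γ : G)⁻¹ * σ₂) (P₀ (P x)))))))))
        (P (P₀ (π (σ₁ * σ₂) (P₀ (P x))))) := by
  have hcomm' : ∀ (g : G) (z : H), P₀ (π g z) = π g (P₀ z) := fun g z => by
    have := congrArg (fun T : H →L[ℂ] H => T z) (hcomm g); simpa using this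
  have hidem : ∀ z : H, P₀ (P₀ z) = P₀ z := fun z => by
    have := congrArg (fun T : H →L[ℂ] H => T z) hP₀idem; simpa using this
  have hπcomp : ∀ (a b : G) (z : H), π a (π b z) = π (a * b) z := by
    intro a b z; rw [map_mul]; rfl
  have main : ∀ w : H,
      HasSum (fun γ : Γ =>
          P₀ (π (σ₁ * ↑γ) (P₀ (P (P₀ (π ((↑γ : G)⁻¹ * σ₂) (P₀ w)))))))
        (P₀ (π (σ₁ * σ₂) (P₀ w))) := by
    intro w
    have hkey := wandering_hasSum π hunit Γ L horth hgen P hPmem hPorth (π σ₂ (P₀ w))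
    have hmap := (P₀.comp (π σ₁)).hasSum hkey
    have hterm : ∀ γ : Γ,
        P₀ (π (σ₁ * ↑γ) (P₀ (P (P₀ (π ((↑γ : G)⁻¹ * σ₂) (P₀ w))))))
          = (P₀.comp (π σ₁)) (π ↑γ (P (π ((↑γ : G))⁻¹ (π σ₂ (P₀ w))))) := by
      intro γ
      have h1 : P₀ (π ((↑γ : G)⁻¹ * σ₂) (P₀ w)) = π ((↑γ : G)⁻¹ * σ₂) (P₀ w) := by
        rw [hcomm', hidem]
      rw [h1]
      simp only [ContinuousLinearMap.comp_apply]
      rw [hcomm' (σ₁ * ↑γ), hidem, ← hcomm' (σ₁ * ↑γ), hπcomp σ₁ ↑γ,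
        hπcomp ((↑γ : G))⁻¹ σ₂]
    convert hmap using 1
    · exact funext hterm
    · simp only [ContinuousLinearMap.comp_apply, hπcomp]
  intro x
  exact ⟨main x, P.hasSum (main (P x))⟩
end

section
/- In the setting of a unitary representation π of G on H, Γ ≤ G, a Γ-wandering generating subspace L with projection P_L, a commuting projection P₀, and π₀(g) = P₀π(g)P₀: if the family (P_L π₀(γ) P_L)_{γ∈Γ} is absolutely summable in operator norm, then its sum 𝒫 = Σ_{γ∈Γ} P_L π₀(γ) P_L is an orthogonal projection (𝒫* = 𝒫 and 𝒫² = 𝒫) acting on L. -/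
set_option maxHeartbeats 2000000


open scoped InnerProductSpace

/-- If the family `(P_L π₀(γ) P_L)_{γ∈Γ}` is absolutely summable in operator norm, its
sum `𝒫 = Σ_{γ∈Γ} P_L π₀(γ) P_L` is an orthogonal projection acting on `L`. -/
theorem stmt13 {G H : Type*} [Group G] [NormedAddCommGroup H] [InnerProductSpace ℂ H]
    [CompleteSpace H] (π : G →* (H →L[ℂ] H))
    (hunit : ∀ (g : G) (x y : H), ⟪π g x, π g y⟫_ℂ = ⟪x, y⟫_ℂ)
    (Γ : Subgroup G) (L : Submodule ℂ H)
    (horth : ∀ γ γ' : Γ, γ ≠ γ' → ∀ x ∈ L, ∀ y ∈ L, ⟪π ↑γ x, π ↑γ' y⟫_ℂ = 0)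
    (hgen : (⨆ γ : Γ, L.map (π ↑γ).toLinearMap).topologicalClosure = ⊤)
    (P : H →L[ℂ] H)
    (hPmem : ∀ x : H, P x ∈ L) (hPfix : ∀ x ∈ L, P x = x)
    (hPorth : ∀ x : H, ∀ y ∈ L, ⟪x - P x, y⟫_ℂ = 0)
    (P₀ : H →L[ℂ] H) (hP₀idem : P₀.comp P₀ = P₀)
    (hP₀sa : ∀ x y : H, ⟪P₀ x, y⟫_ℂ = ⟪x, P₀ y⟫_ℂ)
    (hcomm : ∀ g : G, P₀.comp (π g) = (π g).comp P₀)
    (hsum : Summable fun γ : Γ => ‖P.comp (P₀.comp ((π ↑γ).comp (P₀.comp P)))‖) :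
    (∑' γ : Γ, P.comp (P₀.comp ((π ↑γ).comp (P₀.comp P)))).comp
        (∑' γ : Γ, P.comp (P₀.comp ((π ↑γ).comp (P₀.comp P))))
      = (∑' γ : Γ, P.comp (P₀.comp ((π ↑γ).comp (P₀.comp P)))) ∧
    (∀ x y : H, ⟪(∑' γ : Γ, P.comp (P₀.comp ((π ↑γ).comp (P₀.comp P)))) x, y⟫_ℂ
      = ⟪x, (∑' γ : Γ, P.comp (P₀.comp ((π ↑γ).comp (P₀.comp P)))) y⟫_ℂ) ∧
    (∀ x : H, (∑' γ : Γ, P.comp (P₀.comp ((π ↑γ).comp (P₀.comp P)))) x ∈ L) := by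
  classical
  set T : Γ → (H →L[ℂ] H) := fun γ => P.comp (P₀.comp ((π ↑γ).comp (P₀.comp P))) with hTdef
  -- basic consequences of unitarity
  have hπcomp : ∀ (g g' : G) (x : H), π g (π g' x) = π (g * g') x := by
    intro g g' x; rw [map_mul]; rfl
  have hπinv : ∀ (g : G) (x : H), π g (π g⁻¹ x) = x := by
    intro g x; rw [hπcomp, mul_inv_cancel, map_one]; rfl
  have hπnorm : ∀ (g : G) (x : H), ‖π g x‖ = ‖x‖ := by
    intro g x
    have h2 : ‖π g x‖ ^ 2 = ‖x‖ ^ 2 := by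
      rw [← inner_self_eq_norm_sq (𝕜 := ℂ), ← inner_self_eq_norm_sq (𝕜 := ℂ), hunit]
    nlinarith [norm_nonneg (π g x), norm_nonneg x]
  have hπadj : ∀ (g : G) (x y : H), ⟪π g x, y⟫_ℂ = ⟪x, π g⁻¹ y⟫_ℂ := by
    intro g x y
    conv_lhs => rw [← hπinv g y]
    exact hunit g x (π g⁻¹ y)
  -- P is the orthogonal projection onto L
  have hPidem : ∀ x : H, P (P x) = P x := fun x => hPfix _ (hPmem x)
  have hPinner : ∀ (x y : H), y ∈ L → ⟪x, y⟫_ℂ = ⟪P x, y⟫_ℂ := by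
    intro x y hy
    have h := hPorth x y hy
    rw [inner_sub_left, sub_eq_zero] at h
    exact h
  have hPsa : ∀ x y : H, ⟪P x, y⟫_ℂ = ⟪x, P y⟫_ℂ := by
    intro x y
    rw [hPinner x (P y) (hPmem y)]
    rw [← inner_conj_symm, hPinner y (P x) (hPmem x), inner_conj_symm]
  -- the orthogonal family of copies of L
  have hP₀idem' : ∀ x : H, P₀ (P₀ x) = P₀ x := fun x =>
    congrFun (congrArg DFunLike.coe hP₀idem) x
  have hcomm' : ∀ (g : G) (x : H), P₀ (π g x) = π g (P₀ x) := fun g x =>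
    congrFun (congrArg DFunLike.coe (hcomm g)) x
  let V : Γ → L →ₗᵢ[ℂ] H := fun γ =>
    ⟨(π ↑γ).toLinearMap.comp L.subtype, fun x => hπnorm ↑γ x⟩
  have hV : OrthogonalFamily ℂ (fun _ : Γ => L) V := fun γ δ hne x y =>
    horth γ δ hne x x.2 y y.2
  set f : H → Γ → L := fun z γ => (⟨P (π (↑γ)⁻¹ z), hPmem _⟩ : L) with hfdef
  have hVf : ∀ (z : H) (γ : Γ), V γ (f z γ) = π ↑γ (P (π (↑γ)⁻¹ z)) := fun _ _ => rfl
  have hinner_fz : ∀ (z : H) (γ : Γ), ⟪z, V γ (f z γ)⟫_ℂ = ((‖(f z γ : H)‖ : ℂ))^2 := by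
    intro z γ
    have e1 : ⟪V γ (f z γ), z⟫_ℂ = ⟪P (π (↑γ)⁻¹ z), P (π (↑γ)⁻¹ z)⟫_ℂ := by
      rw [hVf, hπadj]
      rw [hPsa, ← hPinner _ _ (hPmem _)]
    rw [← inner_conj_symm, e1, inner_conj_symm]
    exact inner_self_eq_norm_sq_to_K _
  have hbessel : ∀ (z : H) (s : Finset Γ), ∑ γ ∈ s, ‖(f z γ : H)‖^2 ≤ ‖z‖^2 := by
    intro z s
    set y := ∑ γ ∈ s, V γ (f z γ) with hy
    have hnorm : ‖y‖^2 = ∑ γ ∈ s, ‖f z γ‖^2 := hV.norm_sum (f z) s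
    have hzin : ⟪z, y⟫_ℂ = ∑ γ ∈ s, ((‖(f z γ : H)‖:ℂ))^2 := by
      rw [hy, inner_sum]
      exact Finset.sum_congr rfl fun γ _ => hinner_fz z γ
    have hre : ∑ γ ∈ s, ‖(f z γ : H)‖^2 = RCLike.re ⟪z, y⟫_ℂ := by
      rw [hzin]; push_cast; simp [← Complex.ofReal_pow]
    have hcoe : ∀ γ : Γ, ‖f z γ‖ = ‖(f z γ : H)‖ := fun γ => rfl
    have h1 : ∑ γ ∈ s, ‖(f z γ : H)‖^2 ≤ ‖z‖ * ‖y‖ := by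
      rw [hre]; exact re_inner_le_norm z y
    have h2 : ‖y‖^2 = ∑ γ ∈ s, ‖(f z γ : H)‖^2 := by
      rw [hnorm]; exact Finset.sum_congr rfl fun γ _ => by rw [hcoe]
    nlinarith [norm_nonneg y, norm_nonneg z, h1, h2]
  have hfsq : ∀ z : H, Summable (fun γ => ‖f z γ‖^2) := by
    intro z
    exact summable_of_sum_le (fun γ => sq_nonneg _) (hbessel z)
  have hQsummable : ∀ z : H, Summable (fun γ => V γ (f z γ)) := fun z =>
    (hV.summable_iff_norm_sq_summable (f z)).2 (hfsq z)
  have hQtotal : ∀ z : H, HasSum (fun γ : Γ => π ↑γ (P (π (↑γ)⁻¹ z))) z := by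
    intro z
    obtain ⟨y, hy⟩ := hQsummable z
    have key : ∀ (δ : Γ), ∀ x ∈ L, ⟪π ↑δ x, y⟫_ℂ = ⟪π ↑δ x, z⟫_ℂ := by
      intro δ x hx
      have h1 : HasSum (fun γ => ⟪π ↑δ x, V γ (f z γ)⟫_ℂ) ⟪π ↑δ x, y⟫_ℂ :=
        (innerSL ℂ (π ↑δ x)).hasSum hy
      have h2 : HasSum (fun γ => ⟪π ↑δ x, V γ (f z γ)⟫_ℂ) ⟪π ↑δ x, V δ (f z δ)⟫_ℂ := by
        apply hasSum_single δ
        intro γ hγ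
        rw [hVf]
        exact horth δ γ (Ne.symm hγ) x hx _ (hPmem _)
      have h3 : ⟪π ↑δ x, V δ (f z δ)⟫_ℂ = ⟪π ↑δ x, z⟫_ℂ := by
        rw [hVf, hunit, ← hPsa, hPfix x hx, ← hπadj]
      rw [h1.unique h2, h3]
    have hKW : (⨆ γ : Γ, L.map (π ↑γ).toLinearMap) ≤ LinearMap.ker (innerSL ℂ (z - y) : H →ₗ[ℂ] ℂ) := by
      refine iSup_le fun γ => ?_
      rintro u ⟨x, hx, rfl⟩
      have hz : ⟪π ↑γ x, z - y⟫_ℂ = 0 := by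
        rw [inner_sub_right, key γ x hx, sub_self]
      have : ⟪z - y, π ↑γ x⟫_ℂ = 0 := by rw [← inner_conj_symm, hz, map_zero]
      exact this
    have htop : (⊤ : Submodule ℂ H) ≤ LinearMap.ker (innerSL ℂ (z - y) : H →ₗ[ℂ] ℂ) := by
      rw [← hgen]
      exact Submodule.topologicalClosure_minimal _ hKW (ContinuousLinearMap.isClosed_ker _)
    have hzy : z = y := by
      have h0 : ⟪z - y, z - y⟫_ℂ = 0 := by
        have := htop (Submodule.mem_top (x := z - y))
        rwa [LinearMap.mem_ker, ContinuousLinearMap.coe_coe, innerSL_apply_apply] at this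
      rw [inner_self_eq_zero, sub_eq_zero] at h0
      exact h0
    have hy' : HasSum (fun γ : Γ => π ↑γ (P (π (↑γ)⁻¹ z))) y := hy
    rwa [← hzy] at hy'
  -- pointwise description of T
  have hTapp : ∀ (γ : Γ) (x : H), T γ x = P (P₀ (π ↑γ (P₀ (P x)))) := fun _ _ => rfl
  have hTT : ∀ (γ σ : Γ) (x : H),
      T γ (T (γ⁻¹ * σ) x) = (P.comp P₀) (π ↑γ (P (π (↑γ)⁻¹ (π ↑σ (P₀ (P x)))))) := by
    intro γ σ x
    have hcoe : ((γ⁻¹ * σ : Γ) : G) = (↑γ : G)⁻¹ * ↑σ := by push_cast; rfl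
    have hsplit : π ↑(γ⁻¹ * σ) (P₀ (P x)) = π (↑γ)⁻¹ (π ↑σ (P₀ (P x))) := by
      rw [hπcomp, hcoe]
    rw [hTapp, hTapp, hsplit]
    simp only [ContinuousLinearMap.comp_apply, hPidem, hcomm', hP₀idem']
  have hrow : ∀ (σ : Γ) (x : H), HasSum (fun γ : Γ => T γ (T (γ⁻¹ * σ) x)) (T σ x) := by
    intro σ x
    have h := (P.comp P₀).hasSum (hQtotal (π ↑σ (P₀ (P x))))
    have hfun : (fun γ : Γ => T γ (T (γ⁻¹ * σ) x))
        = fun γ : Γ => (P.comp P₀) (π ↑γ (P (π (↑γ)⁻¹ (π ↑σ (P₀ (P x)))))) :=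
      funext fun γ => hTT γ σ x
    rw [hfun]
    exact h
  -- summability infrastructure
  have hTsummable : Summable T := hsum.of_norm
  have hTx : ∀ w : H, Summable (fun γ : Γ => T γ w) := fun w =>
    ((ContinuousLinearMap.apply ℂ H w).hasSum hTsummable.hasSum).summable
  have happ : ∀ w : H, (∑' γ : Γ, T γ) w = ∑' γ : Γ, T γ w := fun w =>
    (ContinuousLinearMap.apply ℂ H w).map_tsum hTsummable
  -- membership in L
  have hLclosed : IsClosed (L : Set H) := by
    have hset : (L : Set H) = {w : H | P w = w} := by
      ext w
      constructor
      · intro hw; exact hPfix w hw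
      · intro hw; rw [← hw]; exact hPmem w
    rw [hset]
    exact isClosed_eq P.continuous continuous_id
  have hmem : ∀ x : H, (∑' γ : Γ, T γ) x ∈ L := by
    intro x
    rw [happ]
    refine hLclosed.mem_of_tendsto (hTx x).hasSum ?_
    exact Filter.Eventually.of_forall fun s => Submodule.sum_mem L fun γ _ => hPmem _
  -- self-adjointness
  have hsa : ∀ x y : H, ⟪(∑' γ : Γ, T γ) x, y⟫_ℂ = ⟪x, (∑' γ : Γ, T γ) y⟫_ℂ := by
    intro x y
    have hterm : ∀ γ : Γ, ⟪T γ x, y⟫_ℂ = ⟪x, T γ⁻¹ y⟫_ℂ := by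
      intro γ
      rw [hTapp, hTapp, hPsa, hP₀sa, hπadj, hP₀sa, hPsa]
      norm_cast
    have hLHS : ⟪(∑' γ : Γ, T γ) x, y⟫_ℂ = ∑' γ : Γ, ⟪T γ x, y⟫_ℂ := by
      have h2 : ⟪y, ∑' γ : Γ, T γ x⟫_ℂ = ∑' γ : Γ, ⟪y, T γ x⟫_ℂ := by
        have h := (innerSL ℂ y).map_tsum (hTx x)
        simpa using h
      rw [happ x, ← inner_conj_symm, h2, starRingEnd_apply, tsum_star]
      exact tsum_congr fun γ => by rw [← starRingEnd_apply, inner_conj_symm]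
    have hRHS : ⟪x, (∑' γ : Γ, T γ) y⟫_ℂ = ∑' γ : Γ, ⟪x, T γ y⟫_ℂ := by
      rw [happ y]
      exact (innerSL ℂ x).map_tsum (hTx y)
    rw [hLHS, hRHS]
    rw [tsum_congr hterm]
    exact (Equiv.inv Γ).tsum_eq fun γ => ⟪x, T γ y⟫_ℂ
  -- idempotence
  have hidem : (∑' γ : Γ, T γ).comp (∑' γ : Γ, T γ) = ∑' γ : Γ, T γ := by
    ext x
    simp only [ContinuousLinearMap.comp_apply]
    have hFs : Summable (fun p : Γ × Γ => T p.1 (T p.2 x)) := by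
      have hb : Summable (fun p : Γ × Γ => ‖T p.1‖ * (‖T p.2‖ * ‖x‖)) :=
        hsum.mul_of_nonneg (hsum.mul_right ‖x‖) (fun γ => norm_nonneg _)
          (fun γ => mul_nonneg (norm_nonneg _) (norm_nonneg _))
      refine Summable.of_norm_bounded hb ?_
      intro p
      calc ‖T p.1 (T p.2 x)‖ ≤ ‖T p.1‖ * ‖T p.2 x‖ := (T p.1).le_opNorm _
        _ ≤ ‖T p.1‖ * (‖T p.2‖ * ‖x‖) :=
          mul_le_mul_of_nonneg_left ((T p.2).le_opNorm x) (norm_nonneg _)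
    have hinner2 : ∀ γ : Γ, Summable fun δ : Γ => T γ (T δ x) := fun γ =>
      ((T γ).hasSum (hTx x).hasSum).summable
    let e : (Γ × Γ) ≃ (Γ × Γ) :=
      { toFun := fun q => (q.2, q.2⁻¹ * q.1)
        invFun := fun p => (p.1 * p.2, p.1)
        left_inv := by rintro ⟨a, b⟩; simp [mul_assoc]
        right_inv := by rintro ⟨a, b⟩; simp [mul_assoc] }
    have hFe : Summable (fun q : Γ × Γ => T q.2 (T (q.2⁻¹ * q.1) x)) :=
      e.summable_iff.2 hFs
    calc (∑' γ : Γ, T γ) ((∑' γ : Γ, T γ) x)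
        = ∑' γ : Γ, T γ ((∑' δ : Γ, T δ) x) := happ _
      _ = ∑' γ : Γ, ∑' δ : Γ, T γ (T δ x) := by
          refine tsum_congr fun γ => ?_
          rw [happ x]
          exact (T γ).map_tsum (hTx x)
      _ = ∑' p : Γ × Γ, T p.1 (T p.2 x) := (Summable.tsum_prod' hFs fun γ => hinner2 γ).symm
      _ = ∑' q : Γ × Γ, T q.2 (T (q.2⁻¹ * q.1) x) := (e.tsum_eq _).symm
      _ = ∑' σ : Γ, ∑' γ : Γ, T γ (T (γ⁻¹ * σ) x) :=
          Summable.tsum_prod' hFe fun σ => (hrow σ x).summable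
      _ = ∑' σ : Γ, T σ x := tsum_congr fun σ => (hrow σ x).tsum_eq
      _ = (∑' γ : Γ, T γ) x := (happ x).symm
  exact ⟨hidem, hsa, hmem⟩
end
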